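/- Let d ≥ 1, let F = 𝔽₂ be the field with two elements, let V = F^d, let G = AGL_d(2) = AGL(V) be the full affine group acting naturally on V, and set n = 2^d. Then μ(G)·b(G) ≥ 2^{d−1}·(d+1); in particular μ(G)·b(G) > (n·log₂ n)/2. -/

import Mathlib

set_option synthInstance.maxHeartbeats 1000000
set_option maxHeartbeats 1000000

/-- The base size of `G` acting on `Ω`: the smallest cardinality of a subset `B ⊆ Ω`
whose pointwise stabilizer in `G` is trivial. -/
noncomputable def baseSize (G Ω : Type*) [Group G] [MulAction G Ω] : ℕ :=
  sInf {n | ∃ B : Finset Ω, B.card = n ∧ ∀ g : G, (∀ ω ∈ B, g • ω = ω) → g = 1}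

/-- The minimal degree of `G` acting on `Ω`: the smallest cardinality of the support of a
non-identity element of `G`. -/
noncomputable def minDegree (G Ω : Type*) [Group G] [MulAction G Ω] : ℕ :=
  sInf {n | ∃ g : G, g ≠ 1 ∧ n = Nat.card {ω : Ω | g • ω ≠ ω}}

/-- The natural (faithful) action of the affine group `AGL(V) = V ≃ᵃ[k] V` on `V`. -/
instance AffineEquiv.applyMulAction (k P : Type*) [Ring k] [AddCommGroup P] [Module k P] :
    MulAction (P ≃ᵃ[k] P) P where
  smul f v := f v
  one_smul _ := rfl
  mul_smul _ _ _ := rfl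

open Module

section Aux

variable {d : ℕ}

local notation "V" => (Fin d → ZMod 2)
local notation "G" => (Fin d → ZMod 2) ≃ᵃ[ZMod 2] (Fin d → ZMod 2)

private lemma smul_def (g : G) (v : V) : g • v = g v := rfl

private lemma V_nontrivial (hd : 1 ≤ d) : ∃ v : V, v ≠ 0 := by
  refine ⟨Function.const _ 1, fun h => ?_⟩
  have := congrFun h ⟨0, hd⟩
  simp [Function.const] at this

private lemma V_card : Nat.card V = 2 ^ d := by
  simp [Nat.card_eq_fintype_card, ZMod.card]

private lemma apply_eq (g : G) (v : V) : g v = g.linear v + g 0 := by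
  have := (g : V →ᵃ[ZMod 2] V).map_vadd (0 : V) v
  simpa [vadd_eq_add] using this

private lemma one_of_forall_fixed (g : G) (h : ∀ v : V, g v = v) : g = 1 :=
  AffineEquiv.ext fun v => h v

/-- The translation by `v`. -/
private lemma translation_ne_one {v : V} (hv : v ≠ 0) :
    AffineEquiv.constVAdd (ZMod 2) (Fin d → ZMod 2) v ≠ 1 := by
  intro h
  apply hv
  have := congrArg (fun e : G => e 0) h
  simpa [AffineEquiv.constVAdd_apply] using this

private lemma fixed_card_le (hd : 1 ≤ d) (g : G) (hg : g ≠ 1) :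
    Nat.card {v : V | g v = v} ≤ 2 ^ (d - 1) := by
  classical
  set L : (Fin d → ZMod 2) →ₗ[ZMod 2] (Fin d → ZMod 2) :=
    LinearMap.id - (g.linear : (Fin d → ZMod 2) →ₗ[ZMod 2] (Fin d → ZMod 2)) with hLdef
  have hLv : ∀ v : V, L v = v - g.linear v := by
    intro v
    simp [hLdef]
  have key : ∀ v : V, g v = v ↔ L v = g 0 := by
    intro v
    rw [apply_eq g v, hLv]
    constructor
    · intro h
      exact sub_eq_of_eq_add' h.symm
    · intro h
      exact (eq_add_of_sub_eq' h).symm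
  by_cases hL : L = 0
  · -- g is a translation by g 0 ≠ 0; no fixed points
    have hb : g 0 ≠ 0 := by
      intro h0
      apply hg
      apply one_of_forall_fixed
      intro v
      rw [key v, hL, h0, LinearMap.zero_apply]
    have hempty : {v : V | g v = v} = ∅ := by
      ext v
      simp only [Set.mem_setOf_eq, Set.mem_empty_iff_false, iff_false]
      intro h
      rw [key v, hL, LinearMap.zero_apply] at h
      exact hb h.symm
    rw [hempty]
    simp
  · rcases Set.eq_empty_or_nonempty {v : V | g v = v} with he | ⟨v₀, hv₀⟩
    · rw [he]; simp
    · have hv₀' : L v₀ = g 0 := (key v₀).mp hv₀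
      -- injection into ker L
      have hF : ∀ v : {v : V | g v = v}, (v : V) - v₀ ∈ LinearMap.ker L := by
        rintro ⟨v, hv⟩
        rw [LinearMap.mem_ker, map_sub, (key v).mp hv, hv₀', sub_self]
      have hinj : Function.Injective
          (fun v : {v : V | g v = v} => (⟨(v : V) - v₀, hF v⟩ : LinearMap.ker L)) := by
        rintro ⟨a, ha⟩ ⟨b, hb⟩ h
        simp only [Subtype.mk_eq_mk] at h ⊢
        exact sub_left_injective h
      have h1 : Nat.card {v : V | g v = v} ≤ Nat.card (LinearMap.ker L) :=
        Nat.card_le_card_of_injective _ hinj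
      have hker : LinearMap.ker L ≠ ⊤ := by
        intro h
        exact hL (LinearMap.ker_eq_top.mp h)
      have hfr : finrank (ZMod 2) (LinearMap.ker L) ≤ d - 1 := by
        have := Submodule.finrank_lt (K := ZMod 2) hker
        rw [Module.finrank_fin_fun] at this
        omega
      have h2 : Nat.card (LinearMap.ker L) = 2 ^ finrank (ZMod 2) (LinearMap.ker L) := by
        rw [Nat.card_eq_fintype_card, card_eq_pow_finrank (K := ZMod 2), ZMod.card]
      calc Nat.card {v : V | g v = v} ≤ Nat.card (LinearMap.ker L) := h1
        _ = 2 ^ finrank (ZMod 2) (LinearMap.ker L) := h2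
        _ ≤ 2 ^ (d - 1) := Nat.pow_le_pow_right (by norm_num) hfr

private lemma moved_card_ge (hd : 1 ≤ d) (g : G) (hg : g ≠ 1) :
    2 ^ (d - 1) ≤ Nat.card {v : V | g • v ≠ v} := by
  have hset : {v : V | g • v ≠ v} = {v : V | g v = v}ᶜ := by
    ext v; simp [smul_def]
  have hsum : ({v : V | g v = v}).ncard + ({v : V | g v = v}ᶜ).ncard = Nat.card V :=
    Set.ncard_add_ncard_compl _
  rw [V_card] at hsum
  have h1 : Nat.card {v : V | g v = v} ≤ 2 ^ (d - 1) := fixed_card_le hd g hg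
  rw [Nat.card_coe_set_eq] at h1 ⊢
  rw [hset]
  have h2 : 2 ^ d = 2 ^ (d - 1) + 2 ^ (d - 1) := by
    obtain ⟨k, rfl⟩ : ∃ k, d = k + 1 := ⟨d - 1, by omega⟩
    rw [Nat.add_sub_cancel, pow_succ]
    ring
  omega

private lemma moved_card_two (g : G) (hg : g ≠ 1) :
    2 ≤ Nat.card {v : V | g • v ≠ v} := by
  have : ∃ v : V, g v ≠ v := by
    by_contra h
    push_neg at h
    exact hg (one_of_forall_fixed g h)
  obtain ⟨v, hv⟩ := this
  have hgv : g (g v) ≠ g v := fun h => hv (g.injective h)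
  have hsub : ({v, g v} : Set V) ⊆ {w : V | g • w ≠ w} := by
    rintro x (rfl | rfl) <;> simp [smul_def, hv, hgv]
  rw [Nat.card_coe_set_eq]
  calc 2 = ({v, g v} : Set V).ncard := (Set.ncard_pair (Ne.symm hv)).symm
    _ ≤ ({w : V | g • w ≠ w}).ncard := Set.ncard_le_ncard hsub (Set.toFinite _)

private lemma exists_ne_one_fixing (hd2 : 2 ≤ d) (B : Finset V) (hBcard : B.card ≤ d) :
    ∃ g : G, g ≠ 1 ∧ ∀ v ∈ B, g v = v := by
  classical
  rcases B.eq_empty_or_nonempty with rfl | ⟨p, hp⟩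
  · obtain ⟨v, hv⟩ := V_nontrivial (le_trans (by norm_num) hd2)
    exact ⟨AffineEquiv.constVAdd (ZMod 2) (Fin d → ZMod 2) v, translation_ne_one hv,
      by simp⟩
  · set S : Finset V := (B.erase p).image (fun v => v - p) with hS
    set W : Submodule (ZMod 2) V := Submodule.span (ZMod 2) (S : Set V) with hW
    have hWr : finrank (ZMod 2) W ≤ d - 1 := by
      have h1 := finrank_span_finset_le_card (R := ZMod 2) S
      have h2 : S.card ≤ d - 1 := by
        calc S.card ≤ (B.erase p).card := Finset.card_image_le
          _ = B.card - 1 := Finset.card_erase_of_mem hp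
          _ ≤ d - 1 := by omega
      exact le_trans h1 h2
    have hWtop : W < ⊤ := by
      rw [lt_top_iff_ne_top]
      intro h
      rw [h, finrank_top, Module.finrank_fin_fun] at hWr
      omega
    obtain ⟨φ, hφ0, hφW⟩ := Submodule.exists_dual_map_eq_bot_of_lt_top hWtop inferInstance
    have hφker : ∀ w ∈ W, φ w = 0 := by
      intro w hw
      have : φ w ∈ W.map φ := Submodule.mem_map_of_mem hw
      rwa [hφW, Submodule.mem_bot] at this
    have hkerbot : LinearMap.ker φ ≠ ⊥ := by
      intro h
      have hinj : Function.Injective φ := LinearMap.ker_eq_bot.mp h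
      have := LinearMap.finrank_le_finrank_of_injective hinj
      rw [Module.finrank_fin_fun, finrank_self] at this
      omega
    obtain ⟨u, hu, hu0⟩ := (Submodule.ne_bot_iff _).mp hkerbot
    have hφu : φ u = 0 := LinearMap.mem_ker.mp hu
    set A : (Fin d → ZMod 2) →ₗ[ZMod 2] (Fin d → ZMod 2) :=
      LinearMap.id + φ.smulRight u with hA
    have hAapp : ∀ v : V, A v = v + φ v • u := fun v => rfl
    have hfixA : ∀ w : V, φ w = 0 → A w = w := by
      intro w h
      rw [hAapp, h, zero_smul, add_zero]
    have hinv : Function.Involutive A := by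
      intro v
      rw [hAapp, hAapp]
      have h1 : φ (v + φ v • u) = φ v := by
        rw [map_add, map_smul, hφu, smul_zero, add_zero]
      rw [h1, add_assoc, ← add_smul, CharTwo.add_self_eq_zero, zero_smul, add_zero]
    set Aeq : (Fin d → ZMod 2) ≃ₗ[ZMod 2] (Fin d → ZMod 2) :=
      LinearEquiv.ofInvolutive A hinv with hAeq
    set g : (Fin d → ZMod 2) ≃ᵃ[ZMod 2] (Fin d → ZMod 2) :=
      ((AffineEquiv.constVAdd (ZMod 2) (Fin d → ZMod 2) (-p)).trans
        Aeq.toAffineEquiv).trans (AffineEquiv.constVAdd (ZMod 2) (Fin d → ZMod 2) p) with hg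
    have hgapp : ∀ v : V, g v = A (v - p) + p := by
      intro v
      simp only [hg, AffineEquiv.trans_apply, AffineEquiv.constVAdd_apply, vadd_eq_add,
        LinearEquiv.coe_toAffineEquiv, hAeq, LinearEquiv.coe_ofInvolutive]
      rw [neg_add_eq_sub, add_comm]
    refine ⟨g, ?_, ?_⟩
    · intro h1
      obtain ⟨v, hv⟩ : ∃ v : V, φ v ≠ 0 := by
        by_contra h
        push_neg at h
        exact hφ0 (LinearMap.ext fun v => h v)
      have := congrArg (fun e : G => e (v + p)) h1
      simp only [hgapp, add_sub_cancel_right, hAapp] at this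
      have h2 : φ v • u = 0 := by
        have h3 : v + φ v • u + p = v + p := by
          simpa using this
        exact add_eq_left.mp (add_right_cancel h3)
      rcases smul_eq_zero.mp h2 with h | h
      · exact hv h
      · exact hu0 h
    · intro b hb
      rcases eq_or_ne b p with rfl | hbp
      · rw [hgapp, sub_self, map_zero, zero_add]
      · have hbw : b - p ∈ W := by
          apply Submodule.subset_span
          rw [hS]
          exact Finset.mem_coe.mpr (Finset.mem_image.mpr ⟨b, Finset.mem_erase.mpr ⟨hbp, hb⟩, rfl⟩)
        rw [hgapp, hfixA _ (hφker _ hbw), sub_add_cancel]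

private lemma base_card_ge (hd2 : 2 ≤ d) (B : Finset V)
    (hB : ∀ g : G, (∀ v ∈ B, g • v = v) → g = 1) : d + 1 ≤ B.card := by
  by_contra h
  push_neg at h
  obtain ⟨g, hg1, hgfix⟩ := exists_ne_one_fixing hd2 B (by omega)
  exact hg1 (hB g hgfix)

private lemma base_card_pos (hd : 1 ≤ d) (B : Finset V)
    (hB : ∀ g : G, (∀ v ∈ B, g • v = v) → g = 1) : 1 ≤ B.card := by
  rcases B.eq_empty_or_nonempty with rfl | hne
  · obtain ⟨v, hv⟩ := V_nontrivial hd
    exact absurd (hB _ (by simp)) (translation_ne_one hv)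
  · exact Finset.card_pos.mpr hne

end Aux

/-- For `d ≥ 1` and `G = AGL_d(2)` acting naturally on `V = 𝔽₂^d` of cardinality `n = 2^d`,
one has `μ(G)·b(G) ≥ 2^(d-1)·(d+1)`; in particular `μ(G)·b(G) > (n·log₂ n)/2 = (2^d·d)/2`. -/
theorem minDegree_mul_baseSize_AGL_two (d : ℕ) (hd : 1 ≤ d) :
    2 ^ (d - 1) * (d + 1) ≤
      minDegree ((Fin d → ZMod 2) ≃ᵃ[ZMod 2] (Fin d → ZMod 2)) (Fin d → ZMod 2) *
        baseSize ((Fin d → ZMod 2) ≃ᵃ[ZMod 2] (Fin d → ZMod 2)) (Fin d → ZMod 2) ∧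
    ((2 : ℝ) ^ d * d) / 2 <
      (minDegree ((Fin d → ZMod 2) ≃ᵃ[ZMod 2] (Fin d → ZMod 2)) (Fin d → ZMod 2) : ℝ) *
        (baseSize ((Fin d → ZMod 2) ≃ᵃ[ZMod 2] (Fin d → ZMod 2)) (Fin d → ZMod 2) : ℝ) := by
  classical
  obtain ⟨v₀, hv₀⟩ := V_nontrivial (d := d) hd
  -- the minimal degree set is nonempty
  have hμmem := Nat.sInf_mem (s := {n | ∃ g : (Fin d → ZMod 2) ≃ᵃ[ZMod 2] (Fin d → ZMod 2),
      g ≠ 1 ∧ n = Nat.card {ω : Fin d → ZMod 2 | g • ω ≠ ω}})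
    ⟨_, AffineEquiv.constVAdd (ZMod 2) (Fin d → ZMod 2) v₀, translation_ne_one hv₀, rfl⟩
  obtain ⟨g, hg1, hgeq⟩ := hμmem
  have hμ1 : 2 ^ (d - 1) ≤ minDegree ((Fin d → ZMod 2) ≃ᵃ[ZMod 2] (Fin d → ZMod 2))
      (Fin d → ZMod 2) := by
    rw [minDegree, hgeq]
    exact moved_card_ge hd g hg1
  have hμ2 : 2 ≤ minDegree ((Fin d → ZMod 2) ≃ᵃ[ZMod 2] (Fin d → ZMod 2))
      (Fin d → ZMod 2) := by
    rw [minDegree, hgeq]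
    exact moved_card_two g hg1
  -- the base size set is nonempty
  have hbmem := Nat.sInf_mem (s := {n | ∃ B : Finset (Fin d → ZMod 2), B.card = n ∧
      ∀ g : (Fin d → ZMod 2) ≃ᵃ[ZMod 2] (Fin d → ZMod 2), (∀ ω ∈ B, g • ω = ω) → g = 1})
    ⟨Finset.univ.card, Finset.univ, rfl, fun g h =>
      one_of_forall_fixed g fun v => h v (Finset.mem_univ v)⟩
  obtain ⟨B, hBcard, hBbase⟩ := hbmem
  have hb1 : 1 ≤ baseSize ((Fin d → ZMod 2) ≃ᵃ[ZMod 2] (Fin d → ZMod 2))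
      (Fin d → ZMod 2) := by
    rw [baseSize, ← hBcard]
    exact base_card_pos hd B hBbase
  have hb2 : 2 ≤ d → d + 1 ≤ baseSize ((Fin d → ZMod 2) ≃ᵃ[ZMod 2] (Fin d → ZMod 2))
      (Fin d → ZMod 2) := by
    intro hd2
    rw [baseSize, ← hBcard]
    exact base_card_ge hd2 B hBbase
  have hmain : 2 ^ (d - 1) * (d + 1) ≤
      minDegree ((Fin d → ZMod 2) ≃ᵃ[ZMod 2] (Fin d → ZMod 2)) (Fin d → ZMod 2) *
        baseSize ((Fin d → ZMod 2) ≃ᵃ[ZMod 2] (Fin d → ZMod 2)) (Fin d → ZMod 2) := by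
    rcases eq_or_lt_of_le hd with h1 | h2
    · -- d = 1
      have hdd : d = 1 := h1.symm
      subst hdd
      simpa using Nat.mul_le_mul hμ2 hb1
    · exact Nat.mul_le_mul hμ1 (hb2 h2)
  refine ⟨hmain, ?_⟩
  have hcast : ((2 : ℝ) ^ (d - 1) * (d + 1) : ℝ) ≤
      (minDegree ((Fin d → ZMod 2) ≃ᵃ[ZMod 2] (Fin d → ZMod 2)) (Fin d → ZMod 2) : ℝ) *
        (baseSize ((Fin d → ZMod 2) ≃ᵃ[ZMod 2] (Fin d → ZMod 2)) (Fin d → ZMod 2) : ℝ) := by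
    exact_mod_cast hmain
  have hhalf : ((2 : ℝ) ^ d * d) / 2 = 2 ^ (d - 1) * d := by
    have : d = (d - 1) + 1 := by omega
    rw [this]
    push_cast
    ring
  rw [hhalf]
  refine lt_of_lt_of_le ?_ hcast
  have hpos : (0 : ℝ) < 2 ^ (d - 1) := by positivity
  have : (d : ℝ) < (d : ℝ) + 1 := by linarith
  calc (2 : ℝ) ^ (d - 1) * d < 2 ^ (d - 1) * ((d : ℝ) + 1) := by
        exact mul_lt_mul_of_pos_left this hpos
    _ = 2 ^ (d - 1) * ((d : ℕ) + 1 : ℕ) := by push_cast; ring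
    _ ≤ _ := by push_cast at hcast ⊢; linarith
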